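/- For any fixed finite relational vocabulary σ and any integer n ≥ 0, the number of (isomorphism classes of) σ-trees that are cores and have diameter at most n is finite. -/

import Mathlib

/-- Homomorphism of σ-structures. -/
def SHom {ι : Type} (arity : ι → ℕ) {A B : Type}
    (R : ∀ i, Set (Fin (arity i) → A)) (S : ∀ i, Set (Fin (arity i) → B))
    (f : A → B) : Prop :=
  ∀ i, ∀ t ∈ R i, (f ∘ t) ∈ S i

/-- Vertices of the incidence multigraph: elements and blocks (hyperedges). -/
def IncVert {ι : Type} (arity : ι → ℕ) (A : Type)
    (R : ∀ i, Set (Fin (arity i) → A)) : Type :=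
  A ⊕ (Σ i : ι, {t : Fin (arity i) → A // t ∈ R i})

/-- Adjacency in the incidence multigraph. -/
def IncAdj {ι : Type} (arity : ι → ℕ) {A : Type}
    (R : ∀ i, Set (Fin (arity i) → A)) :
    IncVert arity A R → IncVert arity A R → Prop :=
  fun u v => ∃ (i : ι) (t : Fin (arity i) → A) (ht : t ∈ R i) (j : Fin (arity i)),
    (u = Sum.inl (t j) ∧ v = Sum.inr ⟨i, t, ht⟩) ∨
    (v = Sum.inl (t j) ∧ u = Sum.inr ⟨i, t, ht⟩)

/-- Number of hyperedges (blocks). -/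
noncomputable def BlockCount {ι : Type} (arity : ι → ℕ) {A : Type}
    (R : ∀ i, Set (Fin (arity i) → A)) : ℕ :=
  Set.ncard {p : Σ i : ι, Fin (arity i) → A | p.2 ∈ R p.1}

/-- Number of edges of the incidence multigraph (coordinate occurrences). -/
noncomputable def IncEdgeCount {ι : Type} (arity : ι → ℕ) {A : Type}
    (R : ∀ i, Set (Fin (arity i) → A)) : ℕ :=
  Set.ncard {p : Σ i : ι, (Fin (arity i) → A) × Fin (arity i) | p.2.1 ∈ R p.1}

/-- A finite σ-structure is a σ-tree when its incidence multigraph is connected and has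
exactly one edge fewer than it has vertices (i.e. it is a tree). -/
def IsTreeStruct {ι : Type} (arity : ι → ℕ) {A : Type}
    (R : ∀ i, Set (Fin (arity i) → A)) : Prop :=
  (∀ u v : IncVert arity A R, Relation.ReflTransGen (IncAdj arity R) u v) ∧
    IncEdgeCount arity R + 1 = Nat.card A + BlockCount arity R

/-- Reachability within `k` steps. -/
def ReachIn {V : Type} (adj : V → V → Prop) : ℕ → V → V → Prop
  | 0 => fun u v => u = v
  | (k + 1) => fun u v => u = v ∨ ∃ w, adj u w ∧ ReachIn adj k w v

namespace Stmt13

section Reach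

variable {V : Type} {adj : V → V → Prop}

lemma reachIn_refl (k : ℕ) (u : V) : ReachIn adj k u u := by
  cases k with
  | zero => rfl
  | succ k => exact Or.inl rfl

lemma reachIn_mono {k k' : ℕ} (h : k ≤ k') {u v : V} (hr : ReachIn adj k u v) :
    ReachIn adj k' u v := by
  induction k' generalizing k u v with
  | zero => rwa [Nat.le_zero.mp h] at hr
  | succ k' ih =>
    cases k with
    | zero => exact hr ▸ reachIn_refl _ u
    | succ k =>
      rcases hr with rfl | ⟨w, hw, hr⟩
      · exact Or.inl rfl
      · exact Or.inr ⟨w, hw, ih (by omega) hr⟩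

lemma reachIn_trans {k m : ℕ} {u v w : V} (h1 : ReachIn adj k u v)
    (h2 : ReachIn adj m v w) : ReachIn adj (k + m) u w := by
  induction k generalizing u with
  | zero => exact h1 ▸ reachIn_mono (by omega) h2
  | succ k ih =>
    rw [Nat.succ_add]
    rcases h1 with rfl | ⟨x, hx, hr⟩
    · exact reachIn_mono (by omega) h2
    · exact Or.inr ⟨x, hx, ih hr⟩

lemma reachIn_snoc {k : ℕ} {u v w : V} (h1 : ReachIn adj k u v) (h2 : adj v w) :
    ReachIn adj (k + 1) u w :=
  reachIn_trans h1 (Or.inr ⟨w, h2, rfl⟩)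

lemma reachIn_symm (hsymm : ∀ a b, adj a b → adj b a) {k : ℕ} {u v : V}
    (h : ReachIn adj k u v) : ReachIn adj k v u := by
  induction k generalizing u v with
  | zero => exact h.symm
  | succ k ih =>
    rcases h with rfl | ⟨w, hw, hr⟩
    · exact Or.inl rfl
    · exact reachIn_snoc (ih hr) (hsymm _ _ hw)

/-- distance; junk value if not reachable. -/
noncomputable def rdist (adj : V → V → Prop) (u v : V) : ℕ :=
  sInf {k | ReachIn adj k u v}

lemma rdist_spec {u v : V} (h : ∃ k, ReachIn adj k u v) :
    ReachIn adj (rdist adj u v) u v :=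
  Nat.sInf_mem h

lemma rdist_le {k : ℕ} {u v : V} (h : ReachIn adj k u v) : rdist adj u v ≤ k :=
  Nat.sInf_le h

lemma rdist_self (u : V) : rdist adj u u = 0 :=
  Nat.le_zero.mp (rdist_le (reachIn_refl 0 u))

lemma rdist_eq_zero {u v : V} (h : rdist adj u v = 0)
    (hr : ∃ k, ReachIn adj k u v) : u = v := by
  have := rdist_spec hr
  rw [h] at this
  exact this

lemma rdist_triangle {u v w : V} (h1 : ∃ k, ReachIn adj k u v)
    (h2 : ∃ k, ReachIn adj k v w) :
    rdist adj u w ≤ rdist adj u v + rdist adj v w :=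
  rdist_le (reachIn_trans (rdist_spec h1) (rdist_spec h2))

lemma rdist_symm (hsymm : ∀ a b, adj a b → adj b a) (u v : V)
    (h : ∃ k, ReachIn adj k u v) : rdist adj v u ≤ rdist adj u v := by
  exact rdist_le (reachIn_symm hsymm (rdist_spec h))

/-- decomposition of a geodesic: first step. -/
lemma rdist_decomp {u v : V} {m : ℕ} (h : ∃ k, ReachIn adj k u v)
    (hd : rdist adj u v = m + 1) :
    ∃ w, adj u w ∧ (∃ k, ReachIn adj k w v) ∧ rdist adj w v = m := by
  have hs := rdist_spec h
  rw [hd] at hs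
  rcases hs with rfl | ⟨w, hw, hr⟩
  · have := rdist_self (adj := adj) u; omega
  refine ⟨w, hw, ⟨m, hr⟩, ?_⟩
  have h1 : rdist adj w v ≤ m := rdist_le hr
  rcases Nat.lt_or_ge (rdist adj w v) m with hlt | hge
  · exfalso
    have : ReachIn adj (rdist adj w v + 1) u v :=
      Or.inr ⟨w, hw, rdist_spec ⟨m, hr⟩⟩
    have := rdist_le this
    omega
  · omega

lemma reachIn_parity (side : V → Bool) (hside : ∀ a b, adj a b → side a ≠ side b)
    {k : ℕ} {u v : V} (h : ReachIn adj k u v) :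
    ∃ m, m ≤ k ∧ ReachIn adj m u v ∧ (Even m ↔ side u = side v) := by
  induction k generalizing u v with
  | zero =>
    have hv : u = v := h
    subst hv
    exact ⟨0, le_refl _, reachIn_refl 0 u, by simp⟩
  | succ k ih =>
    rcases h with rfl | ⟨w, hw, hr⟩
    · exact ⟨0, by omega, reachIn_refl 0 u, by simp⟩
    · obtain ⟨m, hm, hrm, hpar⟩ := ih hr
      refine ⟨m + 1, by omega, Or.inr ⟨w, hw, hrm⟩, ?_⟩
      rw [Nat.even_add_one, hpar]
      have h1 : side u ≠ side w := hside _ _ hw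
      revert h1; cases side u <;> cases side w <;> cases side v <;> simp

lemma rdist_parity (side : V → Bool) (hside : ∀ a b, adj a b → side a ≠ side b)
    {u v : V} (h : ∃ k, ReachIn adj k u v) :
    Even (rdist adj u v) ↔ side u = side v := by
  obtain ⟨m, hm, hrm, hpar⟩ := reachIn_parity side hside (rdist_spec h)
  have : rdist adj u v ≤ m := rdist_le hrm
  have : m = rdist adj u v := by omega
  rw [← this]; exact hpar

lemma adj_rdist_cases (hsymm : ∀ a b, adj a b → adj b a)
    (side : V → Bool) (hside : ∀ a b, adj a b → side a ≠ side b)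
    (hreach : ∀ a b : V, ∃ k, ReachIn adj k a b)
    (r : V) {u v : V} (h : adj u v) :
    rdist adj r v = rdist adj r u + 1 ∨ rdist adj r u = rdist adj r v + 1 := by
  have h1 : rdist adj r v ≤ rdist adj r u + 1 :=
    rdist_le (reachIn_snoc (rdist_spec (hreach r u)) h)
  have h2 : rdist adj r u ≤ rdist adj r v + 1 :=
    rdist_le (reachIn_snoc (rdist_spec (hreach r v)) (hsymm _ _ h))
  have p1 := rdist_parity side hside (hreach r u)
  have p2 := rdist_parity side hside (hreach r v)
  have hne : side u ≠ side v := hside _ _ h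
  have : ¬ (Even (rdist adj r u) ↔ Even (rdist adj r v)) := by
    rw [p1, p2]
    revert hne; cases side r <;> cases side u <;> cases side v <;> simp
  rcases Nat.even_or_odd (rdist adj r u) with he | ho <;>
    rcases Nat.even_or_odd (rdist adj r v) with he' | ho'
  · exact absurd (iff_of_true he he') this
  · rcases he with ⟨c,hc⟩; rcases ho' with ⟨c',hc'⟩; omega
  · rcases ho with ⟨c,hc⟩; rcases he' with ⟨c',hc'⟩; omega
  · exfalso; exact this (by constructor <;> intro h' <;>
      [ (exact absurd h' (Nat.not_even_iff_odd.mpr ho));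
        (exact absurd h' (Nat.not_even_iff_odd.mpr ho')) ])

end Reach

/-- codes for rooted branches, with fuel -/
def EC (ι : Type) (arity : ι → ℕ) : ℕ → Type
  | 0 => PUnit
  | (d+1) => Finset (Σ i : ι, Fin (arity i) → Option (EC ι arity d))

def ECtoF {ι : Type} {arity : ι → ℕ} {d : ℕ} (x : EC ι arity (d+1)) :
    Finset (Σ i : ι, Fin (arity i) → Option (EC ι arity d)) := x

noncomputable instance ECFintype (ι : Type) [Fintype ι] (arity : ι → ℕ) :
    ∀ d, Fintype (EC ι arity d)
  | 0 => inferInstanceAs (Fintype PUnit)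
  | (d+1) => by
      letI := ECFintype ι arity d
      letI : DecidableEq (EC ι arity d) := Classical.decEq _
      exact inferInstanceAs (Fintype (Finset (Σ i : ι, Fin (arity i) → Option (EC ι arity d))))

noncomputable def Kbound (ι : Type) [Fintype ι] (arity : ι → ℕ) (n : ℕ) : ℕ :=
  Fintype.card (Σ i : ι, Fin (arity i) → Option (EC ι arity n))

noncomputable def Mbound (ι : Type) [Fintype ι] (arity : ι → ℕ) : ℕ :=
  Finset.univ.sup arity

noncomputable def Nbound (ι : Type) [Fintype ι] (arity : ι → ℕ) (n : ℕ) : ℕ :=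
  (2*n+1) * (Kbound ι arity n + Mbound ι arity + 1)^(2*n)

section Main

attribute [local instance] Classical.propDecidable

variable {ι : Type} [Fintype ι] {arity : ι → ℕ} {A : Type} [Fintype A]
  {R : ∀ i, Set (Fin (arity i) → A)}

/-- incidences -/
abbrev Inc' (arity : ι → ℕ) (A : Type) (R : ∀ i, Set (Fin (arity i) → A)) : Type :=
  Σ i : ι, {t : Fin (arity i) → A // t ∈ R i} × Fin (arity i)

def blkOf (c : Inc' arity A R) : IncVert arity A R := Sum.inr ⟨c.1, c.2.1⟩

def tupOf (c : Inc' arity A R) : A := c.2.1.1 c.2.2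

noncomputable instance instFinV : Fintype (IncVert arity A R) :=
  inferInstanceAs (Fintype (A ⊕ Σ i : ι, {t : Fin (arity i) → A // t ∈ R i}))

noncomputable abbrev dd (u v : IncVert arity A R) : ℕ := rdist (IncAdj arity R) u v

lemma adj_inc (i : ι) (t : Fin (arity i) → A) (ht : t ∈ R i) (j : Fin (arity i)) :
    IncAdj arity R (Sum.inl (t j)) (Sum.inr ⟨i, t, ht⟩) :=
  ⟨i, t, ht, j, Or.inl ⟨rfl, rfl⟩⟩

lemma adj_symm {u v : IncVert arity A R} (h : IncAdj arity R u v) : IncAdj arity R v u := by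
  obtain ⟨i, t, ht, j, hc⟩ := h
  exact ⟨i, t, ht, j, hc.symm⟩

lemma adj_of_inl {a : A} {v : IncVert arity A R} (h : IncAdj arity R (Sum.inl a) v) :
    ∃ (i : ι) (t : Fin (arity i) → A) (ht : t ∈ R i) (j : Fin (arity i)),
      t j = a ∧ v = Sum.inr ⟨i, t, ht⟩ := by
  obtain ⟨i, t, ht, j, hc⟩ := h
  rcases hc with ⟨h1, h2⟩ | ⟨h1, h2⟩
  · exact ⟨i, t, ht, j, (Sum.inl.inj h1).symm, h2⟩
  · exact absurd h2 (by simp)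

lemma adj_of_inr {i : ι} {t : Fin (arity i) → A} {ht : t ∈ R i} {v : IncVert arity A R}
    (h : IncAdj arity R (Sum.inr ⟨i, t, ht⟩) v) : ∃ j, v = Sum.inl (t j) := by
  obtain ⟨i', t', ht', j, hc⟩ := h
  rcases hc with ⟨h1, h2⟩ | ⟨h1, h2⟩
  · exact absurd h1 (by simp)
  · injection (Sum.inr.inj h2) with hi hsnd
    subst hi
    have h4 := eq_of_heq hsnd
    injection h4 with h5
    subst h5
    exact ⟨j, h1⟩

/-- The two sides of the bipartite incidence graph. -/
def vside : IncVert arity A R → Bool := Sum.elim (fun _ => false) (fun _ => true)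

lemma adj_side {u v : IncVert arity A R} (h : IncAdj arity R u v) : vside u ≠ vside v := by
  obtain ⟨i, t, ht, j, hc⟩ := h
  rcases hc with ⟨h1, h2⟩ | ⟨h1, h2⟩ <;> subst h1 <;> subst h2 <;> simp [vside]

section WithDiam

variable {n : ℕ}
variable (hdiam : ∀ u v : IncVert arity A R, ReachIn (IncAdj arity R) (2*n) u v)

include hdiam

lemma reach_all (u v : IncVert arity A R) : ∃ k, ReachIn (IncAdj arity R) k u v :=
  ⟨2*n, hdiam u v⟩

lemma dd_le (u v : IncVert arity A R) : dd u v ≤ 2*n := rdist_le (hdiam u v)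

lemma dd_symm (u v : IncVert arity A R) : dd u v = dd v u :=
  le_antisymm (by simpa [dd] using rdist_symm (fun _ _ h => adj_symm h) v u (reach_all hdiam v u))
    (by simpa [dd] using rdist_symm (fun _ _ h => adj_symm h) u v (reach_all hdiam u v))

lemma dd_triangle (u v w : IncVert arity A R) : dd u w ≤ dd u v + dd v w :=
  rdist_triangle (reach_all hdiam u v) (reach_all hdiam v w)

lemma dd_eq_zero {u v : IncVert arity A R} (h : dd u v = 0) : u = v :=
  rdist_eq_zero h (reach_all hdiam u v)

lemma dd_adj_le {u v : IncVert arity A R} (h : IncAdj arity R u v) : dd u v ≤ 1 :=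
  rdist_le (Or.inr ⟨v, h, rfl⟩)

/-- neighbours are at distance exactly one more or one less from any root -/
lemma adj_dd_cases (r : IncVert arity A R) {u v : IncVert arity A R}
    (h : IncAdj arity R u v) :
    dd r v = dd r u + 1 ∨ dd r u = dd r v + 1 :=
  adj_rdist_cases (fun _ _ h => adj_symm h) vside (fun _ _ h => adj_side h)
    (reach_all hdiam) r h

/-- decomposition of the geodesic from u's side -/
lemma dd_decomp {u v : IncVert arity A R} {m : ℕ} (hd : dd u v = m + 1) :
    ∃ w, IncAdj arity R u w ∧ dd w v = m :=
  (rdist_decomp (reach_all hdiam u v) hd).imp fun w ⟨h1, _, h3⟩ => ⟨h1, h3⟩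

/-- the endpoint of an incidence further from r -/
noncomputable def deeper (r : IncVert arity A R) (c : Inc' arity A R) : IncVert arity A R :=
  if dd r (blkOf c) < dd r (Sum.inl (tupOf c)) then Sum.inl (tupOf c) else blkOf c

omit hdiam in
lemma adj_tup_blk (c : Inc' arity A R) :
    IncAdj arity R (Sum.inl (tupOf c)) (blkOf c) :=
  adj_inc c.1 c.2.1.1 c.2.1.2 c.2.2

variable (r : IncVert arity A R)

lemma deeper_cases (c : Inc' arity A R) :
    (deeper r c = Sum.inl (tupOf c) ∧ dd r (Sum.inl (tupOf c)) = dd r (blkOf c) + 1) ∨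
    (deeper r c = blkOf c ∧ dd r (blkOf c) = dd r (Sum.inl (tupOf c)) + 1) := by
  rcases adj_dd_cases hdiam r (adj_tup_blk c) with h | h
  · right
    refine ⟨?_, h⟩
    exact if_neg (by omega)
  · left
    refine ⟨?_, h⟩
    exact if_pos (by omega)

lemma deeper_ne (c : Inc' arity A R) : deeper r c ≠ r := by
  intro hc
  have h0 : dd r (deeper r c) = 0 := by rw [hc]; exact rdist_self r
  rcases deeper_cases hdiam r c with ⟨h1, h2⟩ | ⟨h1, h2⟩ <;> rw [h1] at h0 <;> omega

lemma deeper_surj {v : IncVert arity A R} (hv : v ≠ r) :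
    ∃ c : Inc' arity A R, deeper r c = v := by
  have h0 : dd r v ≠ 0 := fun h => hv (dd_eq_zero hdiam h).symm
  obtain ⟨m, hm⟩ : ∃ m, dd r v = m + 1 := ⟨dd r v - 1, by omega⟩
  have hm' : dd v r = m + 1 := by rw [dd_symm hdiam]; exact hm
  obtain ⟨w, hadj, hw⟩ := dd_decomp hdiam hm'
  have hw' : dd r w = m := by rw [dd_symm hdiam]; exact hw
  obtain ⟨i, t, ht, j, hc⟩ := hadj
  refine ⟨⟨i, ⟨t, ht⟩, j⟩, ?_⟩
  rcases hc with ⟨h1, h2⟩ | ⟨h1, h2⟩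
  · -- v = inl (t j), w = blk
    rw [deeper]; refine Eq.trans (if_pos ?_) ?_; rotate_left
    · exact h1.symm
    · have : blkOf (⟨i, ⟨t, ht⟩, j⟩ : Inc' arity A R) = w := h2.symm
      rw [this, hw']
      show m < dd r (Sum.inl (t j))
      rw [← h1, hm]
      omega
  · -- w = inl (t j), v = blk
    rw [deeper]; refine Eq.trans (if_neg ?_) ?_; rotate_left
    · exact h2.symm
    · show ¬ (dd r (Sum.inr ⟨i, t, ht⟩) < dd r (Sum.inl (t j)))
      rw [← h1, ← h2, hm, hw']
      omega

end WithDiam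

section WithEuler

variable {n : ℕ}
variable (hdiam : ∀ u v : IncVert arity A R, ReachIn (IncAdj arity R) (2*n) u v)
variable (heuler : IncEdgeCount arity R + 1 = Nat.card A + BlockCount arity R)
variable (r : IncVert arity A R)

lemma card_inc' : Nat.card (Inc' arity A R) = IncEdgeCount arity R := by
  rw [IncEdgeCount, ← Nat.card_coe_set_eq]
  exact Nat.card_congr
    { toFun := fun c => ⟨⟨c.1, c.2.1.1, c.2.2⟩, c.2.1.2⟩
      invFun := fun p => ⟨p.1.1, ⟨p.1.2.1, p.2⟩, p.1.2.2⟩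
      left_inv := fun c => rfl
      right_inv := fun p => rfl }

lemma card_blk' : Nat.card (Σ i : ι, {t : Fin (arity i) → A // t ∈ R i}) =
    BlockCount arity R := by
  rw [BlockCount, ← Nat.card_coe_set_eq]
  exact Nat.card_congr
    { toFun := fun c => ⟨⟨c.1, c.2.1⟩, c.2.2⟩
      invFun := fun p => ⟨p.1.1, p.1.2, p.2⟩
      left_inv := fun c => rfl
      right_inv := fun p => rfl }

lemma card_V : Nat.card (IncVert arity A R) = Nat.card A + BlockCount arity R := by
  rw [← card_blk']
  exact Nat.card_sum

include hdiam heuler r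

lemma deeper_inj : Function.Injective (deeper r) := by
  classical
  have hV : Nonempty (IncVert arity A R) := ⟨r⟩
  have hcard : Fintype.card (Inc' arity A R) = Fintype.card (IncVert arity A R) - 1 := by
    have h1 : Nat.card (Inc' arity A R) + 1 = Nat.card (IncVert arity A R) := by
      rw [card_inc', card_V]; exact heuler
    simp only [Nat.card_eq_fintype_card] at h1
    omega
  -- image of deeper is contained in the complement of {r}
  have himg : (Finset.univ.image (deeper r)) ⊆ Finset.univ.filter (· ≠ r) := by
    intro v hv
    simp only [Finset.mem_image] at hv
    obtain ⟨c, _, rfl⟩ := hv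
    simp only [Finset.mem_filter, Finset.mem_univ, true_and]
    exact deeper_ne hdiam r c
  have hsurj : Finset.univ.filter (· ≠ r) ⊆ Finset.univ.image (deeper r) := by
    intro v hv
    simp only [Finset.mem_filter, Finset.mem_univ, true_and] at hv
    obtain ⟨c, hc⟩ := deeper_surj hdiam r hv
    simp only [Finset.mem_image]
    exact ⟨c, Finset.mem_univ c, hc⟩
  have heq : Finset.univ.image (deeper r) = Finset.univ.filter (· ≠ r) :=
    Finset.Subset.antisymm himg hsurj
  have hfc : (Finset.univ.filter (· ≠ r)).card = Fintype.card (IncVert arity A R) - 1 := by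
    have := Finset.card_filter_add_card_filter_not
      (s := (Finset.univ : Finset (IncVert arity A R))) (p := (· ≠ r))
    have h2 : (Finset.univ.filter (fun v => ¬ v ≠ r)).card = 1 := by
      have : Finset.univ.filter (fun v : IncVert arity A R => ¬ v ≠ r) = {r} := by
        ext v; simp [eq_comm]
      rw [this, Finset.card_singleton]
    have h3 : (Finset.univ : Finset (IncVert arity A R)).card =
        Fintype.card (IncVert arity A R) := rfl
    omega
  have hcardim : (Finset.univ.image (deeper r)).card =
      (Finset.univ : Finset (Inc' arity A R)).card := by
    rw [heq, hfc, Finset.card_univ, hcard]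
  have hinj := Finset.injOn_of_card_image_eq (f := deeper r) (s := Finset.univ) hcardim
  intro c c' hcc
  exact hinj (Finset.mem_coe.mpr (Finset.mem_univ c)) (Finset.mem_coe.mpr (Finset.mem_univ c')) hcc

/-- tuples of blocks are injective -/
lemma tuple_inj {i : ι} {t : Fin (arity i) → A} (ht : t ∈ R i) {j j' : Fin (arity i)}
    (h : t j = t j') : j = j' := by
  have h1 : deeper r ⟨i, ⟨t, ht⟩, j⟩ = deeper r ⟨i, ⟨t, ht⟩, j'⟩ := by
    rw [deeper, deeper]
    have h2 : tupOf (⟨i, ⟨t, ht⟩, j⟩ : Inc' arity A R) =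
        tupOf (⟨i, ⟨t, ht⟩, j'⟩ : Inc' arity A R) := h
    rw [h2]
    rfl
  have := deeper_inj hdiam heuler r h1
  injection this with h3 h4
  exact (Prod.ext_iff.mp h4).2

/-- the other endpoint of an incidence, as seen from one endpoint -/
noncomputable def otherEnd (c : Inc' arity A R) (v : IncVert arity A R) : IncVert arity A R :=
  if v = blkOf c then Sum.inl (tupOf c) else blkOf c

/-- parent vertex -/
noncomputable def par (v : IncVert arity A R) : IncVert arity A R :=
  if h : ∃ c : Inc' arity A R, deeper r c = v then otherEnd h.choose v else v

lemma par_spec {v : IncVert arity A R} (hv : v ≠ r) :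
    IncAdj arity R v (par r v) ∧ dd r (par r v) + 1 = dd r v := by
  obtain ⟨c, hc⟩ := deeper_surj hdiam r hv
  have hex : ∃ c : Inc' arity A R, deeper r c = v := ⟨c, hc⟩
  have hcc : hex.choose = c := deeper_inj hdiam heuler r (hex.choose_spec.trans hc.symm)
  rw [par, dif_pos hex, hcc]
  rcases deeper_cases hdiam r c with ⟨h1, h2⟩ | ⟨h1, h2⟩
  · -- v = inl (tupOf c), the parent is blkOf c
    rw [hc] at h1
    rw [show otherEnd c v = blkOf c from if_neg (by rw [h1]; exact Sum.inl_ne_inr)]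
    constructor
    · rw [h1]; exact adj_tup_blk c
    · rw [h1, h2]
  · -- v = blkOf c, parent is inl (tupOf c)
    rw [hc] at h1
    rw [show otherEnd c v = (Sum.inl (tupOf c) : IncVert arity A R) from if_pos h1]
    constructor
    · rw [h1]; exact adj_symm (adj_tup_blk c)
    · rw [h1, h2]

lemma par_unique {v w : IncVert arity A R} (hv : v ≠ r)
    (hadj : IncAdj arity R v w) (hw : dd r w + 1 = dd r v) : w = par r v := by
  obtain ⟨i, t, ht, j, hc⟩ := hadj
  have hex : ∃ c : Inc' arity A R, deeper r c = v := deeper_surj hdiam r hv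
  rcases hc with ⟨h1, h2⟩ | ⟨h1, h2⟩
  · -- v = inl (t j), w = blk
    set c : Inc' arity A R := ⟨i, ⟨t, ht⟩, j⟩ with hcdef
    have hdc : deeper r c = v := by
      rw [deeper]; refine Eq.trans (if_pos ?_) ?_; rotate_left
      · exact h1.symm
      · show dd r (Sum.inr ⟨i, t, ht⟩) < dd r (Sum.inl (t j))
        rw [← h1, ← h2]
        omega
    have hcc : hex.choose = c := deeper_inj hdiam heuler r (hex.choose_spec.trans hdc.symm)
    rw [par, dif_pos hex, hcc, show otherEnd c v = blkOf c from if_neg (by rw [h1]; exact Sum.inl_ne_inr)]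
    exact h2
  · -- v = blk, w = inl (t j)
    set c : Inc' arity A R := ⟨i, ⟨t, ht⟩, j⟩ with hcdef
    have hdc : deeper r c = v := by
      rw [deeper]; refine Eq.trans (if_neg ?_) ?_; rotate_left
      · exact h2.symm
      · show ¬ (dd r (Sum.inr ⟨i, t, ht⟩) < dd r (Sum.inl (t j)))
        rw [← h1, ← h2]
        omega
    have hcc : hex.choose = c := deeper_inj hdiam heuler r (hex.choose_spec.trans hdc.symm)
    rw [par, dif_pos hex, hcc, show otherEnd c v = (Sum.inl (tupOf c) : IncVert arity A R) from if_pos (show v = blkOf c from h2)]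
    exact h1

/-- subtree (descendants) of v w.r.t. root r -/
def Sub (r v : IncVert arity A R) : Set (IncVert arity A R) :=
  {u | dd r u = dd r v + dd v u}

omit hdiam heuler in
lemma sub_self (v : IncVert arity A R) : v ∈ Sub r v := by
  show dd r v = dd r v + dd v v
  have : dd v v = 0 := rdist_self v
  omega

omit heuler in
lemma sub_lt {u v : IncVert arity A R} (h : u ∈ Sub r v) (hne : u ≠ v) :
    dd r v < dd r u := by
  have h' : dd r u = dd r v + dd v u := h
  have : dd v u ≠ 0 := fun h0 => hne (dd_eq_zero hdiam h0).symm
  omega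

omit heuler in
lemma sub_nest {u c v : IncVert arity A R} (hc : c ∈ Sub r v) (hu : u ∈ Sub r c) :
    u ∈ Sub r v ∧ dd v u = dd v c + dd c u := by
  have h1 : dd r u = dd r c + dd c u := hu
  have h2 : dd r c = dd r v + dd v c := hc
  have h3 : dd r u ≤ dd r v + dd v u := dd_triangle hdiam r v u
  have h4 : dd v u ≤ dd v c + dd c u := dd_triangle hdiam v c u
  constructor
  · show dd r u = dd r v + dd v u
    omega
  · omega

omit heuler in
lemma sub_decomp {u v : IncVert arity A R} (h : u ∈ Sub r v) (hne : u ≠ v) :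
    ∃ c, IncAdj arity R v c ∧ dd r c = dd r v + 1 ∧ u ∈ Sub r c ∧ dd c u + 1 = dd v u := by
  have h' : dd r u = dd r v + dd v u := h
  have h0 : dd v u ≠ 0 := fun h0 => hne (dd_eq_zero hdiam h0).symm
  obtain ⟨m, hm⟩ : ∃ m, dd v u = m + 1 := ⟨dd v u - 1, by omega⟩
  obtain ⟨c, hadj, hcu⟩ := dd_decomp hdiam hm
  have h1 : dd r c ≤ dd r v + 1 := by
    have := dd_adj_le hdiam hadj
    have := dd_triangle hdiam r v c
    omega
  have h2 : dd r u ≤ dd r c + dd c u := dd_triangle hdiam r c u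
  have h3 : dd r c = dd r v + 1 := by omega
  exact ⟨c, hadj, h3, by show dd r u = dd r c + dd c u; omega, by omega⟩

lemma sub_par {u v : IncVert arity A R} (h : u ∈ Sub r v) (hne : u ≠ v) :
    par r u ∈ Sub r v ∧ dd r (par r u) + 1 = dd r u ∧ dd v (par r u) + 1 = dd v u := by
  have h' : dd r u = dd r v + dd v u := h
  have h0 : dd v u ≠ 0 := fun h0 => hne (dd_eq_zero hdiam h0).symm
  obtain ⟨m, hm⟩ : ∃ m, dd v u = m + 1 := ⟨dd v u - 1, by omega⟩
  have hm' : dd u v = m + 1 := by rw [dd_symm hdiam]; exact hm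
  obtain ⟨q, hadj, hq⟩ := dd_decomp hdiam hm'
  have hq' : dd v q = m := by rw [dd_symm hdiam]; exact hq
  have h1 : dd r q ≤ dd r v + m := by
    have := dd_triangle hdiam r v q
    omega
  have h2 : dd r u ≤ dd r q + 1 := by
    have := dd_adj_le hdiam (adj_symm hadj)
    have := dd_triangle hdiam r q u
    have := dd_symm hdiam q u
    omega
  have h3 : dd r q + 1 = dd r u := by omega
  have hur : u ≠ r := by
    intro hur
    rw [hur] at h' hm
    have h5 : dd r r = 0 := rdist_self r
    omega
  have hpar : q = par r u := par_unique hdiam heuler r hur hadj h3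
  rw [← hpar]
  exact ⟨by show dd r q = dd r v + dd v q; omega, h3, by omega⟩

lemma sub_unique {u w1 w2 : IncVert arity A R} (h1 : u ∈ Sub r w1) (h2 : u ∈ Sub r w2)
    (hd : dd r w1 = dd r w2) : w1 = w2 := by
  generalize hk : dd r u = k
  induction k using Nat.strong_induction_on generalizing u with
  | _ k ih =>
    by_cases hu1 : u = w1
    · subst hu1
      have h2' : dd r u = dd r w2 + dd w2 u := h2
      have : dd w2 u = 0 := by omega
      exact (dd_eq_zero hdiam this).symm ▸ rfl
    · have hu2 : u ≠ w2 := by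
        intro hu2
        subst hu2
        have h1' : dd r u = dd r w1 + dd w1 u := h1
        have : dd w1 u = 0 := by omega
        exact hu1 (dd_eq_zero hdiam this).symm
      obtain ⟨hp1, hd1, _⟩ := sub_par hdiam heuler r h1 hu1
      obtain ⟨hp2, _, _⟩ := sub_par hdiam heuler r h2 hu2
      exact ih (dd r (par r u)) (by omega) hp1 hp2 rfl

lemma child_mem_sub {v c : IncVert arity A R} (hadj : IncAdj arity R v c)
    (hd : dd r c = dd r v + 1) : c ∈ Sub r v := by
  have h1 : dd v c ≤ 1 := dd_adj_le hdiam hadj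
  have h2 : dd v c ≠ 0 := by
    intro h0
    have := dd_eq_zero hdiam h0
    subst this
    omega
  show dd r c = dd r v + dd v c
  omega

/-- child incidences of an element -/
def CInc (r : IncVert arity A R) (a : A) : Type :=
  {c : Inc' arity A R // tupOf c = a ∧ dd r (blkOf c) = dd r (Sum.inl a) + 1}

noncomputable instance {a : A} : Fintype (CInc r a) :=
  inferInstanceAs (Fintype {c : Inc' arity A R //
    tupOf c = a ∧ dd r (blkOf c) = dd r (Sum.inl a) + 1})

variable {r} in
def cI {a : A} (c : CInc r a) : ι := c.1.1
variable {r} in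
def cT {a : A} (c : CInc r a) : Fin (arity (cI c)) → A := c.1.2.1.1
variable {r} in
def cHT {a : A} (c : CInc r a) : cT c ∈ R (cI c) := c.1.2.1.2
variable {r} in
def cB {a : A} (c : CInc r a) : IncVert arity A R := blkOf c.1

omit hdiam heuler in
lemma cB_eq {a : A} (c : CInc r a) : cB c = Sum.inr ⟨cI c, cT c, cHT c⟩ := rfl

omit hdiam heuler in
lemma cB_dd {a : A} (c : CInc r a) : dd r (cB c) = dd r (Sum.inl a) + 1 := c.2.2

omit hdiam heuler in
lemma cT_par {a : A} (c : CInc r a) : cT c c.1.2.2 = a := c.2.1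

omit hdiam heuler in
lemma adj_el_cB {a : A} (c : CInc r a) : IncAdj arity R (Sum.inl a) (cB c) := by
  have h := adj_inc (cI c) (cT c) (cHT c) c.1.2.2
  rw [cT_par] at h
  exact h

lemma cB_mem_sub {a : A} (c : CInc r a) : cB c ∈ Sub r (Sum.inl a) :=
  child_mem_sub hdiam heuler r (adj_el_cB r c) (cB_dd r c)

/-- every child of an element comes from a child incidence -/
lemma child_of_el {a : A} {w : IncVert arity A R} (hadj : IncAdj arity R (Sum.inl a) w)
    (hd : dd r w = dd r (Sum.inl a) + 1) : ∃ c : CInc r a, cB c = w := by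
  obtain ⟨i, t, ht, j, htj, rfl⟩ := adj_of_inl hadj
  exact ⟨⟨⟨i, ⟨t, ht⟩, j⟩, htj, hd⟩, rfl⟩

/-- decomposition of the subtree of an element -/
lemma sub_el_decomp {a : A} {u : IncVert arity A R} (hu : u ∈ Sub r (Sum.inl a))
    (hne : u ≠ Sum.inl a) : ∃ c : CInc r a, u ∈ Sub r (cB c) := by
  obtain ⟨w, hadj, hd, husub, _⟩ := sub_decomp hdiam r hu hne
  obtain ⟨c, rfl⟩ := child_of_el hdiam heuler r hadj hd
  exact ⟨c, husub⟩

/-- two distinct incidences with the same block are impossible given distinct coords -/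
lemma inc_ext {c1 c2 : Inc' arity A R} (hb : blkOf c1 = blkOf c2)
    (ht : tupOf c1 = tupOf c2) : c1 = c2 := by
  obtain ⟨i1, ⟨t1, ht1⟩, j1⟩ := c1
  obtain ⟨i2, ⟨t2, ht2⟩, j2⟩ := c2
  injection (Sum.inr.inj hb) with hi hsnd
  subst hi
  have h4 := eq_of_heq hsnd
  injection h4 with h5
  subst h5
  have : j1 = j2 := tuple_inj hdiam heuler r ht1 ht
  subst this
  rfl

/-- the child incidence whose subtree contains a given vertex is unique -/
lemma cinc_unique {a : A} {c1 c2 : CInc r a} {u : IncVert arity A R}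
    (h1 : u ∈ Sub r (cB c1)) (h2 : u ∈ Sub r (cB c2)) : c1 = c2 := by
  have hb : cB c1 = cB c2 :=
    sub_unique hdiam heuler r h1 h2 (by rw [cB_dd r c1, cB_dd r c2])
  have ht : tupOf c1.1 = tupOf c2.1 := by
    have e1 : tupOf c1.1 = a := c1.2.1
    have e2 : tupOf c2.1 = a := c2.2.1
    rw [e1, e2]
  exact Subtype.ext (inc_ext hdiam heuler r hb ht)

/-- each coordinate of a child block is either the parent element or a child element -/
lemma coord_cases {a : A} (c : CInc r a) (j' : Fin (arity (cI c))) :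
    cT c j' = a ∨ dd r (Sum.inl (cT c j')) = dd r (cB c) + 1 := by
  have hadj : IncAdj arity R (Sum.inl (cT c j')) (cB c) := adj_inc (cI c) (cT c) (cHT c) j'
  rcases adj_dd_cases hdiam r hadj with h | h
  · -- dd r (cB c) = dd r (inl (cT c j')) + 1, so inl (cT c j') is the parent of cB c
    left
    have hBr : cB c ≠ r := by
      intro hc
      have h0 : dd r (cB c) = 0 := by rw [hc]; exact rdist_self r
      have := cB_dd r c
      omega
    have hp1 : Sum.inl (cT c j') = par r (cB c) :=
      par_unique hdiam heuler r hBr (adj_symm hadj) (by omega)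
    have hp2 : Sum.inl a = par r (cB c) :=
      par_unique hdiam heuler r hBr (adj_symm (adj_el_cB r c))
        (by have := cB_dd r c; omega)
    have := hp1.trans hp2.symm
    exact Sum.inl.inj this
  · right; exact h

/-- a non-parent coordinate element lies in the subtree of the block -/
lemma coord_mem_sub {a : A} (c : CInc r a) {j' : Fin (arity (cI c))}
    (hne : cT c j' ≠ a) : Sum.inl (cT c j') ∈ Sub r (cB c) := by
  rcases coord_cases hdiam heuler r c j' with h | h
  · exact absurd h hne
  · exact child_mem_sub hdiam heuler r (adj_symm (adj_inc (cI c) (cT c) (cHT c) j')) h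

/-- uniqueness of the non-parent coordinate whose subtree contains a given vertex -/
lemma coord_unique {a : A} (c : CInc r a) {j1 j2 : Fin (arity (cI c))}
    (h1ne : cT c j1 ≠ a) (h2ne : cT c j2 ≠ a) {u : IncVert arity A R}
    (h1 : u ∈ Sub r (Sum.inl (cT c j1))) (h2 : u ∈ Sub r (Sum.inl (cT c j2))) :
    j1 = j2 := by
  have hd1 := (coord_cases hdiam heuler r c j1).resolve_left h1ne
  have hd2 := (coord_cases hdiam heuler r c j2).resolve_left h2ne
  have := sub_unique hdiam heuler r h1 h2 (by omega)
  exact tuple_inj hdiam heuler r (cHT c) (Sum.inl.inj this)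

/-- any block through an element in the subtree of a block B is itself in that subtree -/
lemma block_through_mem {B : Σ i : ι, {t : Fin (arity i) → A // t ∈ R i}}
    {x : A} (hx : Sum.inl x ∈ Sub r (Sum.inr B)) {w : IncVert arity A R}
    (hadj : IncAdj arity R (Sum.inl x) w) : w ∈ Sub r (Sum.inr B) := by
  rcases adj_dd_cases hdiam r hadj with h | h
  · -- w is a child of x
    have hw : w ∈ Sub r (Sum.inl x) := child_mem_sub hdiam heuler r hadj h
    exact (sub_nest hdiam r hx hw).1
  · -- w is the parent of x
    have hxr : Sum.inl x ≠ r := by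
      intro hc
      have h0 : dd r (Sum.inl x) = 0 := by rw [hc]; exact rdist_self r
      have hlt : dd r (Sum.inr B) < dd r (Sum.inl x) :=
        sub_lt hdiam r hx Sum.inl_ne_inr
      omega
    have hp : w = par r (Sum.inl x) := par_unique hdiam heuler r hxr hadj (by omega)
    have := (sub_par hdiam heuler r hx Sum.inl_ne_inr).1
    rw [hp]
    exact this

omit hdiam heuler in
lemma blk_ne_root {a : A} (c : CInc r a) (h : cB c = r) : False := by
  have h0 : dd r (cB c) = 0 := by rw [h]; exact rdist_self r
  have := cB_dd r c
  omega

/-- decomposition of a subtree of a child block into coordinate subtrees -/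
lemma sub_blk_decomp {a : A} (c : CInc r a) {u : IncVert arity A R}
    (hu : u ∈ Sub r (cB c)) (hne : u ≠ cB c) :
    ∃ j3, cT c j3 ≠ a ∧ u ∈ Sub r (Sum.inl (cT c j3)) := by
  obtain ⟨w, hadj, hd, husub, _⟩ := sub_decomp hdiam r hu hne
  rw [cB_eq] at hadj
  obtain ⟨j3, rfl⟩ := adj_of_inr hadj
  refine ⟨j3, ?_, husub⟩
  intro hc
  rw [hc] at hd
  have := cB_dd r c
  omega

/-- all coordinates of a block lying in a subtree rooted at an element lie in the subtree -/
lemma coords_in_sub {g : A} {i2 : ι} {s : Fin (arity i2) → A} {hs : s ∈ R i2}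
    (hw : Sum.inr ⟨i2, s, hs⟩ ∈ Sub r (Sum.inl g)) (j : Fin (arity i2)) :
    Sum.inl (s j) ∈ Sub r (Sum.inl g) := by
  have hadj : IncAdj arity R (Sum.inl (s j)) (Sum.inr ⟨i2, s, hs⟩) := adj_inc i2 s hs j
  rcases adj_dd_cases hdiam r hadj with h | h
  · -- the block is a child of (s j) : impossible? no: then s j is the parent of the block
    -- h : dd r (inr ...) = dd r (inl (s j)) + 1, so inl (s j) is the parent of the block
    have hbne : Sum.inr ⟨i2, s, hs⟩ ≠ (Sum.inl g : IncVert arity A R) := by simp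
    have hbr : Sum.inr ⟨i2, s, hs⟩ ≠ r := by
      intro hc
      have h0 : dd r (Sum.inr ⟨i2, s, hs⟩) = 0 := by rw [hc]; exact rdist_self r
      have := sub_lt hdiam r hw hbne
      omega
    have hp : Sum.inl (s j) = par r (Sum.inr ⟨i2, s, hs⟩) :=
      par_unique hdiam heuler r hbr (adj_symm hadj) (by omega)
    have := (sub_par hdiam heuler r hw hbne).1
    rw [hp]
    exact this
  · -- inl (s j) is a child of the block
    have hmem : Sum.inl (s j) ∈ Sub r (Sum.inr ⟨i2, s, hs⟩) :=
      child_mem_sub hdiam heuler r (adj_symm hadj) h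
    exact (sub_nest hdiam r hw hmem).1

omit heuler in
/-- elements strictly in an element subtree differ from the root element -/
lemma sub_el_ne {a x : A} (hx : Sum.inl x ∈ Sub r (Sum.inl a))
    (hlt : dd r (Sum.inl a) < dd r (Sum.inl x)) : x ≠ a := by
  intro hc; subst hc; omega

noncomputable def ecode : (d : ℕ) → A → EC ι arity d
  | 0 => fun _ => PUnit.unit
  | (d+1) => fun a =>
      (Finset.image
        (fun c : CInc r a =>
          (⟨cI c, fun j' => if cT c j' = a then none
            else some (ecode d (cT c j'))⟩ :
            Σ i : ι, Fin (arity i) → Option (EC ι arity d)))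
        Finset.univ : Finset (Σ i : ι, Fin (arity i) → Option (EC ι arity d)))

/-- partner property: b has a child incidence matching the code of c -/
def PPart (d : ℕ) (a b : A) (c : CInc r a) : Prop :=
  ∃ t' : {f : Fin (arity (cI c)) → A // f ∈ R (cI c)},
    dd r (Sum.inr ⟨cI c, t'⟩) = dd r (Sum.inl b) + 1 ∧
    (∀ j', (t'.1 j' = b ↔ cT c j' = a)) ∧
    (∀ j', cT c j' ≠ a → ecode r d (t'.1 j') = ecode r d (cT c j'))

/-- the unique child incidence whose block subtree contains x -/
noncomputable def theChild (a x : A) : Option (CInc r a) :=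
  if h : ∃ c : CInc r a, Sum.inl x ∈ Sub r (cB c) then some h.choose else none

lemma theChild_eq {a x : A} (c : CInc r a) (hxc : Sum.inl x ∈ Sub r (cB c)) :
    theChild r a x = some c := by
  rw [theChild, dif_pos ⟨c, hxc⟩]
  exact congrArg some (cinc_unique hdiam heuler r (Exists.choose_spec (⟨c, hxc⟩ :
    ∃ c : CInc r a, Sum.inl x ∈ Sub r (cB c))) hxc)

/-- the unique non-parent coordinate whose subtree contains x -/
noncomputable def theCoord {a : A} (c : CInc r a) (x : A) : Option (Fin (arity (cI c))) :=
  if h : ∃ j3, cT c j3 ≠ a ∧ Sum.inl x ∈ Sub r (Sum.inl (cT c j3)) then some h.choose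
  else none

lemma theCoord_eq {a x : A} (c : CInc r a) {j3 : Fin (arity (cI c))}
    (hne : cT c j3 ≠ a) (hx3 : Sum.inl x ∈ Sub r (Sum.inl (cT c j3))) :
    theCoord r c x = some j3 := by
  have hex : ∃ j3, cT c j3 ≠ a ∧ Sum.inl x ∈ Sub r (Sum.inl (cT c j3)) := ⟨j3, hne, hx3⟩
  rw [theCoord, dif_pos hex]
  exact congrArg some (coord_unique hdiam heuler r c hex.choose_spec.1 hne
    hex.choose_spec.2 hx3)

noncomputable def psi : (d : ℕ) → A → A → A → A
  | 0 => fun a b x => if x = a then b else x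
  | (d+1) => fun a b x =>
      if x = a then b
      else
        match theChild r a x with
        | none => x
        | some c =>
          if h2 : PPart r d a b c then
            match theCoord r c x with
            | none => x
            | some j3 => psi d (cT c j3) (h2.choose.1 j3) x
          else x

omit hdiam heuler in
lemma psi_self (d : ℕ) (a b : A) : psi r d a b a = b := by
  cases d <;> simp [psi]

omit hdiam heuler in
lemma psi_zero (a b x : A) : psi r 0 a b x = if x = a then b else x := rfl

lemma psi_route {d : ℕ} {a b x : A} (hx : x ≠ a) (c : CInc r a)
    (hxc : Sum.inl x ∈ Sub r (cB c)) (h2 : PPart r d a b c)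
    {j3 : Fin (arity (cI c))} (hne : cT c j3 ≠ a)
    (hx3 : Sum.inl x ∈ Sub r (Sum.inl (cT c j3))) :
    psi r (d+1) a b x = psi r d (cT c j3) (h2.choose.1 j3) x := by
  show (if x = a then b else _) = _
  rw [if_neg hx, theChild_eq hdiam heuler r c hxc]
  show (if h2' : PPart r d a b c then _ else x) = _
  rw [dif_pos h2]
  rw [theCoord_eq hdiam heuler r c hne hx3]

/-- matching lemma: from equal codes all child incidences have partners -/
lemma ppart_of_ecode {d : ℕ} {a b : A} (hcode : ecode r (d+1) a = ecode r (d+1) b)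
    (c : CInc r a) : PPart r d a b c := by
  classical
  have hmem : (⟨cI c, fun j' => if cT c j' = a then none
      else some (ecode r d (cT c j'))⟩ :
      Σ i : ι, Fin (arity i) → Option (EC ι arity d)) ∈
      ECtoF (ecode r (d+1) b) := by
    rw [← hcode]
    exact Finset.mem_image_of_mem _ (Finset.mem_univ c)
  rw [show ECtoF (ecode r (d+1) b) =
    Finset.image (fun c' : CInc r b =>
      (⟨cI c', fun j' => if cT c' j' = b then none
        else some (ecode r d (cT c' j'))⟩ :
        Σ i : ι, Fin (arity i) → Option (EC ι arity d))) Finset.univ from rfl] at hmem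
  obtain ⟨c', _, heq⟩ := Finset.mem_image.mp hmem
  obtain ⟨⟨i', ⟨t', ht'⟩, jp'⟩, hpar', hdist'⟩ := c'
  dsimp only [cI, cT] at heq
  injection heq with hi hfun
  subst hi
  have hf := eq_of_heq hfun
  have hf' : ∀ j', (if t' j' = b then none else some (ecode r d (t' j'))) =
      (if cT c j' = a then none else some (ecode r d (cT c j'))) :=
    fun j' => congrFun hf j'
  refine ⟨⟨t', ht'⟩, hdist', ?_, ?_⟩
  · intro j'
    have hj := hf' j'
    by_cases hb : t' j' = b <;> by_cases ha : cT c j' = a <;>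
      simp [hb, ha] at hj ⊢
  · intro j' ha
    have hj := hf' j'
    by_cases hb : t' j' = b
    · rw [if_pos hb, if_neg ha] at hj
      exact absurd hj (by simp)
    · rw [if_neg hb, if_neg ha] at hj
      exact Option.some.inj hj

omit hdiam heuler in
lemma sub_ge {u v : IncVert arity A R} (h : u ∈ Sub r v) : dd r v ≤ dd r u := by
  have h' : dd r u = dd r v + dd v u := h
  omega

/-- facts about the partner grandchild -/
lemma ppart_child {d : ℕ} {a b : A} (hd : dd r (Sum.inl a) = dd r (Sum.inl b))
    (c : CInc r a) (h2 : PPart r d a b c) {j3 : Fin (arity (cI c))} (hne : cT c j3 ≠ a) :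
    dd r (Sum.inl (cT c j3)) = dd r (Sum.inl a) + 2 ∧
    dd r (Sum.inl (h2.choose.1 j3)) = dd r (Sum.inl a) + 2 ∧
    (∀ y, y ∈ Sub r (Sum.inl (h2.choose.1 j3)) → y ∈ Sub r (Sum.inl b)) := by
  have hne' : h2.choose.1 j3 ≠ b := fun hb => hne ((h2.choose_spec.2.1 j3).mp hb)
  have hpc : h2.choose.1 c.1.2.2 = b := (h2.choose_spec.2.1 c.1.2.2).mpr (cT_par r c)
  let cPart : CInc r b := ⟨⟨cI c, h2.choose, c.1.2.2⟩, hpc, h2.choose_spec.1⟩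
  have hP1 : dd r (Sum.inl (cT c j3)) = dd r (Sum.inl a) + 2 := by
    have h1 := (coord_cases hdiam heuler r c j3).resolve_left hne
    have h2' := cB_dd r c
    omega
  have hP2 : dd r (Sum.inl (h2.choose.1 j3)) = dd r (Sum.inl a) + 2 := by
    have h1 : dd r (Sum.inl (h2.choose.1 j3)) = dd r (cB cPart) + 1 :=
      (coord_cases hdiam heuler r cPart j3).resolve_left hne'
    have h2' : dd r (cB cPart) = dd r (Sum.inl b) + 1 := cB_dd r cPart
    omega
  refine ⟨hP1, hP2, fun y hy => ?_⟩
  have hm1 : Sum.inl (h2.choose.1 j3) ∈ Sub r (cB cPart) :=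
    coord_mem_sub hdiam heuler r cPart hne'
  have hm2 : cB cPart ∈ Sub r (Sum.inl b) := cB_mem_sub hdiam heuler r cPart
  exact (sub_nest hdiam r hm2 (sub_nest hdiam r hm1 hy).1).1

lemma psi_route_sub {d : ℕ} {a b : A} (c : CInc r a) (h2 : PPart r d a b c)
    {j3 : Fin (arity (cI c))} (hne : cT c j3 ≠ a)
    (hdepth : dd r (Sum.inl a) < dd r (Sum.inl (cT c j3)))
    {x : A} (hx : Sum.inl x ∈ Sub r (Sum.inl (cT c j3))) :
    psi r (d+1) a b x = psi r d (cT c j3) (h2.choose.1 j3) x := by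
  have h1 : dd r (Sum.inl (cT c j3)) ≤ dd r (Sum.inl x) := sub_ge r hx
  have hxa : x ≠ a := by intro hc; subst hc; omega
  exact psi_route hdiam heuler r hxa c
    (sub_nest hdiam r (coord_mem_sub hdiam heuler r c hne) hx).1 h2 hne hx

lemma psi_invariant (d : ℕ) : ∀ (a b : A), dd r (Sum.inl a) = dd r (Sum.inl b) →
    2*n ≤ dd r (Sum.inl a) + 2*d → ecode r d a = ecode r d b →
    (∀ x : A, Sum.inl x ∈ Sub r (Sum.inl a) → Sum.inl (psi r d a b x) ∈ Sub r (Sum.inl b)) ∧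
    (∀ (i2 : ι) (s : Fin (arity i2) → A) (hs : s ∈ R i2),
      Sum.inr ⟨i2, s, hs⟩ ∈ Sub r (Sum.inl a) →
      (fun j => psi r d a b (s j)) ∈ R i2) := by
  induction d with
  | zero =>
    intro a b hd hfuel hcode
    have h2n : dd r (Sum.inl a) = 2*n := le_antisymm (dd_le hdiam _ _) (by omega)
    constructor
    · intro x hx
      by_cases hxa : x = a
      · subst hxa
        rw [psi_self]
        exact sub_self r _
      · exfalso
        have := sub_lt hdiam r hx (fun hc => hxa (Sum.inl.inj hc))
        have := dd_le hdiam r (Sum.inl x)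
        omega
    · intro i2 s hs hw
      exfalso
      have := sub_lt hdiam r hw Sum.inr_ne_inl
      have := dd_le hdiam r (Sum.inr ⟨i2, s, hs⟩ : IncVert arity A R)
      omega
  | succ d ih =>
    intro a b hd hfuel hcode
    constructor
    · -- C2
      intro x hx
      by_cases hxa : x = a
      · subst hxa
        rw [psi_self]
        exact sub_self r _
      · obtain ⟨c, hxc⟩ := sub_el_decomp hdiam heuler r hx (fun hc => hxa (Sum.inl.inj hc))
        have h2 : PPart r d a b c := ppart_of_ecode hdiam heuler r hcode c
        have hxcne : (Sum.inl x : IncVert arity A R) ≠ cB c := by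
          rw [cB_eq]; simp
        obtain ⟨j3, hne, hx3⟩ := sub_blk_decomp hdiam heuler r c hxc hxcne
        obtain ⟨hP1, hP2, hchain⟩ := ppart_child hdiam heuler r hd c h2 hne
        rw [psi_route_sub hdiam heuler r c h2 hne (by omega) hx3]
        have hIH := ih (cT c j3) (h2.choose.1 j3) (by omega) (by omega)
          ((h2.choose_spec.2.2 j3 hne).symm)
        exact hchain _ (hIH.1 x hx3)
    · -- C3
      intro i2 s hs hw
      have hwa : (Sum.inr ⟨i2, s, hs⟩ : IncVert arity A R) ≠ Sum.inl a := by simp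
      obtain ⟨c, hwc⟩ := sub_el_decomp hdiam heuler r hw hwa
      have h2 : PPart r d a b c := ppart_of_ecode hdiam heuler r hcode c
      by_cases hwb : (Sum.inr ⟨i2, s, hs⟩ : IncVert arity A R) = cB c
      · -- the block is the child block itself
        rw [cB_eq] at hwb
        injection hwb with hsig
        injection hsig with hi hrest
        subst hi
        have h4 := eq_of_heq hrest
        injection h4 with h5
        subst h5
        have hfn : (fun j => psi r (d+1) a b (cT c j)) = h2.choose.1 := by
          funext j
          by_cases hja : cT c j = a
          · rw [hja, psi_self]
            exact ((h2.choose_spec.2.1 j).mpr hja).symm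
          · obtain ⟨hP1, hP2, hchain⟩ := ppart_child hdiam heuler r hd c h2 hja
            rw [psi_route_sub hdiam heuler r c h2 hja (by omega) (sub_self r _)]
            rw [psi_self]
        rw [hfn]
        exact h2.choose.2
      · obtain ⟨j3, hne, hw3⟩ := sub_blk_decomp hdiam heuler r c hwc hwb
        obtain ⟨hP1, hP2, hchain⟩ := ppart_child hdiam heuler r hd c h2 hne
        have hIH := ih (cT c j3) (h2.choose.1 j3) (by omega) (by omega)
          ((h2.choose_spec.2.2 j3 hne).symm)
        have hfn : (fun j => psi r (d+1) a b (s j)) =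
            (fun j => psi r d (cT c j3) (h2.choose.1 j3) (s j)) := by
          funext j
          exact psi_route_sub hdiam heuler r c h2 hne (by omega)
            (coords_in_sub hdiam heuler r hw3 j)
        rw [hfn]
        exact hIH.2 i2 s hs hw3

noncomputable def bcodeF (d : ℕ) {a : A} (c : CInc r a) :
    Σ i : ι, Fin (arity i) → Option (EC ι arity d) :=
  ⟨cI c, fun j' => if cT c j' = a then none else some (ecode r d (cT c j'))⟩

variable (hcore : ∀ f : A → A, SHom arity R R f → Function.Bijective f)

include hcore in
/-- distinct child incidences have distinct codes, else we can fold -/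
lemma cinc_code_inj {a : A} (c1 c2 : CInc r a) (h : bcodeF r n c1 = bcodeF r n c2) :
    c1 = c2 := by
  classical
  by_contra hne12
  obtain ⟨⟨i2', ⟨t2, ht2⟩, j2'⟩, hpar2, hdist2⟩ := c2
  dsimp only [bcodeF, cI, cT] at h
  injection h with hi hfun
  subst hi
  have hf := eq_of_heq hfun
  have hf' : ∀ j', (if cT c1 j' = a then none else some (ecode r n (cT c1 j'))) =
      (if t2 j' = a then none else some (ecode r n (t2 j'))) :=
    fun j' => congrFun hf j'
  have hiff : ∀ j', (cT c1 j' = a ↔ t2 j' = a) := by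
    intro j'
    have hj := hf' j'
    by_cases h1 : cT c1 j' = a <;> by_cases h2 : t2 j' = a <;> simp [h1, h2] at hj ⊢
  have hec : ∀ j', cT c1 j' ≠ a → ecode r n (cT c1 j') = ecode r n (t2 j') := by
    intro j' h1
    have hj := hf' j'
    rw [if_neg h1, if_neg (fun h2 => h1 ((hiff j').mpr h2))] at hj
    exact Option.some.inj hj
  set c2' : CInc r a := ⟨⟨cI c1, ⟨t2, ht2⟩, j2'⟩, hpar2, hdist2⟩ with hc2'def
  -- the two child blocks are distinct
  have hbne : cB c1 ≠ cB c2' := by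
    intro hb
    refine hne12 (Subtype.ext (inc_ext hdiam heuler r hb ?_))
    have e1 : tupOf c1.1 = a := c1.2.1
    have e2 : tupOf c2'.1 = a := hpar2
    exact e1.trans e2.symm
  -- there exists a non-parent coordinate, else the two incidences are equal
  obtain ⟨j0, hj0⟩ : ∃ j0, cT c1 j0 ≠ a := by
    by_contra hall
    push_neg at hall
    have htt : cT c1 = t2 := funext (fun j' => (hall j').trans ((hiff j').mp (hall j')).symm)
    subst htt
    refine hne12 (Subtype.ext (inc_ext hdiam heuler r rfl ?_))
    exact (cT_par r c1).trans hpar2.symm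
  -- the fold map
  set F : A → A := fun x =>
    if Sum.inl x ∈ Sub r (cB c1) then
      match theCoord r c1 x with
      | some j3 => psi r n (cT c1 j3) (t2 j3) x
      | none => x
    else x with hFdef
  -- basic computation rules for F
  have hF_out : ∀ x, Sum.inl x ∉ Sub r (cB c1) → F x = x := by
    intro x hx
    rw [hFdef]
    exact if_neg hx
  have hF_in : ∀ (j3 : Fin (arity (cI c1))), cT c1 j3 ≠ a →
      ∀ x, Sum.inl x ∈ Sub r (Sum.inl (cT c1 j3)) →
      F x = psi r n (cT c1 j3) (t2 j3) x := by
    intro j3 hne x hx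
    have hmem : Sum.inl x ∈ Sub r (cB c1) :=
      (sub_nest hdiam r (coord_mem_sub hdiam heuler r c1 hne) hx).1
    rw [hFdef]
    show (if Sum.inl x ∈ Sub r (cB c1) then _ else x) = _
    rw [if_pos hmem, theCoord_eq hdiam heuler r c1 hne hx]
  -- distances of grandchildren
  have hgdd : ∀ (j3 : Fin (arity (cI c1))), cT c1 j3 ≠ a →
      dd r (Sum.inl (cT c1 j3)) = dd r (Sum.inl a) + 2 ∧
      dd r (Sum.inl (t2 j3)) = dd r (Sum.inl a) + 2 := by
    intro j3 hne
    have hne2 : t2 j3 ≠ a := fun h2 => hne ((hiff j3).mpr h2)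
    have h1 := (coord_cases hdiam heuler r c1 j3).resolve_left hne
    have h2 : dd r (Sum.inl (t2 j3)) = dd r (cB c2') + 1 :=
      (coord_cases hdiam heuler r c2' j3).resolve_left hne2
    have h3 := cB_dd r c1
    have h4 : dd r (cB c2') = dd r (Sum.inl a) + 1 := cB_dd r c2'
    omega
  -- the invariant instance for a grandchild pair
  have hinv : ∀ (j3 : Fin (arity (cI c1))), (hne : cT c1 j3 ≠ a) →
      (∀ x : A, Sum.inl x ∈ Sub r (Sum.inl (cT c1 j3)) →
        Sum.inl (psi r n (cT c1 j3) (t2 j3) x) ∈ Sub r (Sum.inl (t2 j3))) ∧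
      (∀ (i3 : ι) (s : Fin (arity i3) → A) (hs : s ∈ R i3),
        Sum.inr ⟨i3, s, hs⟩ ∈ Sub r (Sum.inl (cT c1 j3)) →
        (fun j => psi r n (cT c1 j3) (t2 j3) (s j)) ∈ R i3) := by
    intro j3 hne
    obtain ⟨hg1, hg2⟩ := hgdd j3 hne
    exact psi_invariant hdiam heuler r n (cT c1 j3) (t2 j3) (by omega) (by omega)
      (hec j3 hne)
  -- F is a homomorphism
  have hhom : SHom arity R R F := by
    intro i3 s hs
    by_cases hin : (Sum.inr ⟨i3, s, hs⟩ : IncVert arity A R) ∈ Sub r (cB c1)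
    · by_cases hwb : (Sum.inr ⟨i3, s, hs⟩ : IncVert arity A R) = cB c1
      · -- the block is cB c1 itself
        rw [cB_eq] at hwb
        injection hwb with hsig
        injection hsig with hi hrest
        subst hi
        have h4 := eq_of_heq hrest
        injection h4 with h5
        subst h5
        have hfn : F ∘ cT c1 = t2 := by
          funext j
          show F (cT c1 j) = t2 j
          by_cases hja : cT c1 j = a
          · rw [hja]
            have hnotin : (Sum.inl a : IncVert arity A R) ∉ Sub r (cB c1) := by
              intro hmem
              have := sub_ge r hmem
              have := cB_dd r c1
              omega
            rw [hF_out a hnotin]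
            exact ((hiff j).mp hja).symm
          · rw [hF_in j hja (cT c1 j) (sub_self r _), psi_self]
        show F ∘ cT c1 ∈ R (cI c1)
        rw [hfn]
        exact ht2
      · obtain ⟨j3, hne, hw3⟩ := sub_blk_decomp hdiam heuler r c1 hin hwb
        have hfn : F ∘ s = (fun j => psi r n (cT c1 j3) (t2 j3) (s j)) := by
          funext j
          show F (s j) = _
          exact hF_in j3 hne (s j) (coords_in_sub hdiam heuler r hw3 j)
        show F ∘ s ∈ R i3
        rw [hfn]
        exact (hinv j3 hne).2 i3 s hs hw3
    · have hfn : F ∘ s = s := by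
        funext j
        show F (s j) = s j
        apply hF_out
        intro hmem
        apply hin
        have hadj : IncAdj arity R (Sum.inl (s j)) (Sum.inr ⟨i3, s, hs⟩) :=
          adj_inc i3 s hs j
        have := block_through_mem hdiam heuler r
          (B := ⟨cI c1, cT c1, cHT c1⟩) (by rw [cB_eq] at hmem; exact hmem) hadj
        rw [cB_eq]
        exact this
      show F ∘ s ∈ R i3
      rw [hfn]
      exact hs
  -- F is not injective
  have hx0 : Sum.inl (cT c1 j0) ∈ Sub r (Sum.inl (cT c1 j0)) := sub_self r _
  have hy0mem : Sum.inl (t2 j0) ∈ Sub r (cB c2') :=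
    coord_mem_sub hdiam heuler r c2' (fun h2 => hj0 ((hiff j0).mpr h2))
  have hy0notin : Sum.inl (t2 j0) ∉ Sub r (cB c1) := by
    intro hmem
    exact hbne (sub_unique hdiam heuler r hmem hy0mem
      (by rw [cB_dd r c1, cB_dd r c2']))
  have hFx0 : F (cT c1 j0) = t2 j0 := by
    rw [hF_in j0 hj0 (cT c1 j0) hx0, psi_self]
  have hFy0 : F (t2 j0) = t2 j0 := hF_out _ hy0notin
  have hne0 : cT c1 j0 ≠ t2 j0 := by
    intro hc
    apply hy0notin
    rw [← hc]
    exact (sub_nest hdiam r (coord_mem_sub hdiam heuler r c1 hj0) hx0).1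
  have hbij := hcore F hhom
  have := hbij.1 (hFx0.trans hFy0.symm)
  exact hne0 this

include hcore in
lemma cinc_card_le (a : A) : Fintype.card (CInc r a) ≤ Kbound ι arity n := by
  classical
  exact Fintype.card_le_of_injective (bcodeF r n)
    (fun c1 c2 h => cinc_code_inj hdiam heuler r hcore c1 c2 h)

include hcore in
lemma level_bound : ∀ d : ℕ,
    (Finset.univ.filter (fun v : IncVert arity A R => dd r v = d)).card ≤
      (Kbound ι arity n + Mbound ι arity + 1)^d := by
  classical
  intro d
  induction d with
  | zero =>
    have hsub : Finset.univ.filter (fun v : IncVert arity A R => dd r v = 0) ⊆ {r} := by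
      intro v hv
      simp only [Finset.mem_filter, Finset.mem_univ, true_and] at hv
      simp [(dd_eq_zero hdiam hv).symm]
    calc (Finset.univ.filter (fun v : IncVert arity A R => dd r v = 0)).card
        ≤ ({r} : Finset (IncVert arity A R)).card := Finset.card_le_card hsub
      _ = 1 := Finset.card_singleton r
      _ ≤ _ := by simp
  | succ d ihd =>
    set C0 := Kbound ι arity n + Mbound ι arity + 1 with hC0
    set L1 := Finset.univ.filter (fun v : IncVert arity A R => dd r v = d + 1) with hL1
    -- members of L1 are distinct from the root
    have hner : ∀ v ∈ L1, v ≠ r := by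
      intro v hv hc
      simp only [hL1, Finset.mem_filter, Finset.mem_univ, true_and] at hv
      rw [hc] at hv
      have h0 : dd r r = 0 := rdist_self r
      omega
    have hkey : L1.card ≤ C0 * (L1.image (par r)).card := by
      apply Finset.card_le_mul_card_image
      intro u hu
      -- the fiber over u
      set fib := L1.filter (fun v => par r v = u) with hfib
      have hfibv : ∀ v ∈ fib, IncAdj arity R v u ∧ dd r u + 1 = dd r v ∧ v ≠ r := by
        intro v hv
        simp only [hfib, Finset.mem_filter] at hv
        obtain ⟨hv1, hv2⟩ := hv
        have hvr : v ≠ r := hner v hv1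
        obtain ⟨hadj, hdd⟩ := par_spec hdiam heuler r hvr
        rw [hv2] at hadj hdd
        exact ⟨hadj, hdd, hvr⟩
      match u with
      | Sum.inl au =>
        -- fiber members are child blocks of au
        have hmap : ∀ v ∈ fib, (if h : ∃ c : CInc r au, cB c = v then
            some h.choose else none) ≠ (none : Option (CInc r au)) := by
          intro v hv
          obtain ⟨hadj, hdd, hvr⟩ := hfibv v hv
          have hex : ∃ c : CInc r au, cB c = v :=
            child_of_el hdiam heuler r (adj_symm hadj) (by omega)
          rw [dif_pos hex]
          simp
        have hinj : Set.InjOn (fun v => if h : ∃ c : CInc r au, cB c = v then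
            some h.choose else (none : Option (CInc r au))) fib := by
          intro v1 hv1 v2 hv2 heq12
          simp only at heq12
          obtain ⟨hadj1, hdd1, hvr1⟩ := hfibv v1 (Finset.mem_coe.mp hv1)
          obtain ⟨hadj2, hdd2, hvr2⟩ := hfibv v2 (Finset.mem_coe.mp hv2)
          have hex1 : ∃ c : CInc r au, cB c = v1 :=
            child_of_el hdiam heuler r (adj_symm hadj1) (by omega)
          have hex2 : ∃ c : CInc r au, cB c = v2 :=
            child_of_el hdiam heuler r (adj_symm hadj2) (by omega)
          rw [dif_pos hex1, dif_pos hex2] at heq12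
          have := Option.some.inj heq12
          rw [← hex1.choose_spec, ← hex2.choose_spec, this]
        have hcard : fib.card ≤ Fintype.card (Option (CInc r au)) := by
          apply Finset.card_le_card_of_injOn _ (fun v _ => Finset.mem_univ _) hinj
        have := cinc_card_le hdiam heuler r hcore au
        rw [Fintype.card_option] at hcard
        have hM : (0:ℕ) ≤ Mbound ι arity := Nat.zero_le _
        omega
      | Sum.inr B =>
        -- fiber members are elements among the coordinates of B
        obtain ⟨iB, tB, htB⟩ := B
        have hsub2 : fib ⊆ Finset.univ.image (fun j : Fin (arity iB) => (Sum.inl (tB j) : IncVert arity A R)) := by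
          intro v hv
          obtain ⟨hadj, hdd, hvr⟩ := hfibv v hv
          obtain ⟨j, rfl⟩ := adj_of_inr (adj_symm hadj)
          exact Finset.mem_image_of_mem _ (Finset.mem_univ j)
        have hcard : fib.card ≤ arity iB := by
          calc fib.card ≤ _ := Finset.card_le_card hsub2
            _ ≤ (Finset.univ : Finset (Fin (arity iB))).card := Finset.card_image_le
            _ = arity iB := by simp
        have hM : arity iB ≤ Mbound ι arity := Finset.le_sup (Finset.mem_univ iB)
        omega
    have himg : L1.image (par r) ⊆
        Finset.univ.filter (fun v : IncVert arity A R => dd r v = d) := by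
      intro u hu
      obtain ⟨v, hv, rfl⟩ := Finset.mem_image.mp hu
      have hvr := hner v hv
      obtain ⟨hadj, hdd⟩ := par_spec hdiam heuler r hvr
      simp only [hL1, Finset.mem_filter, Finset.mem_univ, true_and] at hv
      simp only [Finset.mem_filter, Finset.mem_univ, true_and]
      omega
    calc L1.card ≤ C0 * (L1.image (par r)).card := hkey
      _ ≤ C0 * (Finset.univ.filter (fun v : IncVert arity A R => dd r v = d)).card :=
          Nat.mul_le_mul_left _ (Finset.card_le_card himg)
      _ ≤ C0 * C0^d := Nat.mul_le_mul_left _ ihd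
      _ = C0^(d+1) := by ring

include hcore in
lemma cardA_le : Fintype.card A ≤ Nbound ι arity n := by
  classical
  set C0 := Kbound ι arity n + Mbound ι arity + 1 with hC0
  have hVA : Fintype.card A ≤ Fintype.card (IncVert arity A R) :=
    Fintype.card_le_of_injective (fun a => (Sum.inl a : IncVert arity A R))
      (fun a b h => Sum.inl.inj h)
  have hVsum : Fintype.card (IncVert arity A R) =
      ∑ k ∈ Finset.range (2*n+1),
        (Finset.univ.filter (fun v : IncVert arity A R => dd r v = k)).card := by
    rw [← Finset.card_univ]
    apply Finset.card_eq_sum_card_fiberwise (f := fun v : IncVert arity A R => dd r v)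
    intro x _
    simp only [Finset.mem_coe, Finset.mem_range]
    have := dd_le hdiam r x
    omega
  have hsum : ∑ k ∈ Finset.range (2*n+1),
      (Finset.univ.filter (fun v : IncVert arity A R => dd r v = k)).card ≤
      (2*n+1) * C0^(2*n) := by
    calc ∑ k ∈ Finset.range (2*n+1),
        (Finset.univ.filter (fun v : IncVert arity A R => dd r v = k)).card
        ≤ ∑ k ∈ Finset.range (2*n+1), C0^(2*n) := by
          apply Finset.sum_le_sum
          intro k hk
          rw [Finset.mem_range] at hk
          calc (Finset.univ.filter (fun v : IncVert arity A R => dd r v = k)).card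
              ≤ C0^k := level_bound hdiam heuler r hcore k
            _ ≤ C0^(2*n) := Nat.pow_le_pow_right (by omega) (by omega)
      _ = (2*n+1) * C0^(2*n) := by
          rw [Finset.sum_const, Finset.card_range]
          ring
  rw [Nbound, ← hC0]
  omega

end WithEuler

end Main

end Stmt13

/-- For every finite vocabulary and every `n`, there are, up to isomorphism, only finitely
many core σ-trees of diameter at most `n` (distance being half the incidence-graph
distance, so diameter `≤ n` means all incidence vertices within `2n` steps). -/
theorem stmt13 (ι : Type) [Fintype ι] (arity : ι → ℕ) (n : ℕ) :
    ∃ (k : ℕ) (Cm : Fin k → Type) (S : ∀ m, ∀ i, Set (Fin (arity i) → Cm m)),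
      ∀ (A : Type) (R : ∀ i, Set (Fin (arity i) → A)),
        Finite A → Nonempty A →
        IsTreeStruct arity R →
        (∀ u v : IncVert arity A R, ReachIn (IncAdj arity R) (2 * n) u v) →
        (∀ f : A → A, SHom arity R R f → Function.Bijective f) →
        ∃ m, ∃ e : A ≃ Cm m, ∀ i (t : Fin (arity i) → A),
          t ∈ R i ↔ (⇑e ∘ t) ∈ S m i := by
  classical
  set N := Stmt13.Nbound ι arity n with hN
  have hfinT : Finite (Σ j : Fin (N+1), ∀ i, Set (Fin (arity i) → Fin j)) := by
    infer_instance
  letI : Fintype (Σ j : Fin (N+1), ∀ i, Set (Fin (arity i) → Fin j)) :=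
    Fintype.ofFinite _
  set eT := Fintype.equivFin (Σ j : Fin (N+1), ∀ i, Set (Fin (arity i) → Fin j)) with heT
  refine ⟨Fintype.card (Σ j : Fin (N+1), ∀ i, Set (Fin (arity i) → Fin j)),
    fun m => Fin ((eT.symm m).1 : ℕ), fun m i => (eT.symm m).2 i, ?_⟩
  intro A R hfin hne htree hdiam hcore
  letI : Fintype A := Fintype.ofFinite A
  obtain ⟨a₀⟩ := hne
  have heuler := htree.2
  have hcard : Fintype.card A ≤ N :=
    Stmt13.cardA_le hdiam heuler (Sum.inl a₀) hcore
  have hj0 : Fintype.card A < N + 1 := by omega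
  set eA := Fintype.equivFin A with heA
  set S' : ∀ i, Set (Fin (arity i) → Fin (Fintype.card A)) :=
    fun i => {u | (fun k => eA.symm (u k)) ∈ R i} with hS'
  set τ : Σ j : Fin (N+1), ∀ i, Set (Fin (arity i) → Fin j) :=
    ⟨⟨Fintype.card A, hj0⟩, S'⟩ with hτ
  refine ⟨eT τ, ?_⟩
  have hmm : eT.symm (eT τ) = τ := Equiv.symm_apply_apply eT τ
  show ∃ e : A ≃ Fin ((eT.symm (eT τ)).1 : ℕ), ∀ i (t : Fin (arity i) → A),
    t ∈ R i ↔ (⇑e ∘ t) ∈ (eT.symm (eT τ)).2 i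
  rw [hmm]
  refine ⟨eA, fun i t => ?_⟩
  show t ∈ R i ↔ (⇑eA ∘ t) ∈ S' i
  have hfe : (fun k => eA.symm ((⇑eA ∘ t) k)) = t :=
    funext fun k => Equiv.symm_apply_apply eA (t k)
  constructor
  · intro h
    show (fun k => eA.symm ((⇑eA ∘ t) k)) ∈ R i
    rw [hfe]
    exact h
  · intro h
    have h' : (fun k => eA.symm ((⇑eA ∘ t) k)) ∈ R i := h
    rw [hfe] at h'
    exact h'
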